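/- (Theorem 1: optimal relay power price.) Suppose b_lb ∈ (0, b_1) satisfies φ(b_lb) = P, and let M be the index with b_M ≥ b_lb ≥ b_{M+1} (convention b_{N+1} = 0). For i = 1, …, M set γ_i = b_i and γ_{M+1} = b_lb, A_i = Σ_{j=1}^i Q_j·F_j/√b_j, B_i = Σ_{j=1}^i Q_j·F_j/b_j, c_i = (A_i/(2B_i))², and let λ_i = γ_{i+1} if c_i < γ_{i+1}, λ_i = γ_i if c_i > γ_i, and λ_i = c_i otherwise. Then the maximum of the relay revenue R(λ) = λ·Σ_{j=1}^N max{0, (Q_j·F_j/√b_j)(1/√λ − 1/√b_j)} over λ ∈ [b_lb, b_1] equals max_{i=1,…,M} { A_i·√λ_i − B_i·λ_i }, and it is attained at the λ_i achieving this maximum. -/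

import Mathlib

open Finset


lemma stmt19_anti_step (f : ℕ → ℝ) (n : ℕ)
    (h : ∀ k, 1 ≤ k → k < n → f (k + 1) ≤ f k) :
    ∀ j k, 1 ≤ j → j ≤ k → k ≤ n → f k ≤ f j := by
  intro j k hj hjk hkn
  induction k, hjk using Nat.le_induction with
  | base => exact le_rfl
  | succ m hm ih =>
    exact (h m (hj.trans hm) (by omega)).trans (ih (by omega))

lemma stmt19_quad_clamp (Aq Bq l r lam0 : ℝ) (hA : 0 < Aq) (hB : 0 < Bq)
    (hl : 0 ≤ l) (hlr : l ≤ r)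
    (h0 : lam0 = if (Aq / (2 * Bq)) ^ 2 < l then l
      else if r < (Aq / (2 * Bq)) ^ 2 then r else (Aq / (2 * Bq)) ^ 2) :
    lam0 ∈ Set.Icc l r ∧
      ∀ lam ∈ Set.Icc l r,
        Aq * Real.sqrt lam - Bq * lam ≤ Aq * Real.sqrt lam0 - Bq * lam0 := by
  set s := Aq / (2 * Bq) with hs_def
  have hs : 0 < s := div_pos hA (by linarith)
  have hAe : 2 * Bq * s = Aq := by rw [hs_def]; field_simp
  have hss : Real.sqrt (s ^ 2) = s := Real.sqrt_sq hs.le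
  constructor
  · rw [h0]; split_ifs with h1 h2
    · exact ⟨le_rfl, hlr⟩
    · exact ⟨hlr, le_rfl⟩
    · exact ⟨not_lt.mp h1, not_lt.mp h2⟩
  · intro lam hlam
    obtain ⟨hlam1, hlam2⟩ := hlam
    have hlam0 : 0 ≤ lam := hl.trans hlam1
    have hu2 : Real.sqrt lam ^ 2 = lam := Real.sq_sqrt hlam0
    rw [h0]; split_ifs with h1 h2
    · have hl2 : Real.sqrt l ^ 2 = l := Real.sq_sqrt hl
      have hvs : s ≤ Real.sqrt l := by
        calc s = Real.sqrt (s ^ 2) := hss.symm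
        _ ≤ Real.sqrt l := Real.sqrt_le_sqrt h1.le
      have huv : Real.sqrt l ≤ Real.sqrt lam := Real.sqrt_le_sqrt hlam1
      nlinarith [mul_nonneg (mul_nonneg hB.le (sub_nonneg.2 huv))
        (show (0:ℝ) ≤ Real.sqrt lam + Real.sqrt l - 2 * s by linarith)]
    · have hr2 : Real.sqrt r ^ 2 = r := Real.sq_sqrt (hl.trans hlr)
      have hvs : Real.sqrt r ≤ s := by
        calc Real.sqrt r ≤ Real.sqrt (s ^ 2) := Real.sqrt_le_sqrt h2.le
        _ = s := hss
      have huv : Real.sqrt lam ≤ Real.sqrt r := Real.sqrt_le_sqrt hlam2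
      nlinarith [mul_nonneg (mul_nonneg hB.le (sub_nonneg.2 huv))
        (show (0:ℝ) ≤ 2 * s - Real.sqrt lam - Real.sqrt r by linarith)]
    · rw [hss]
      nlinarith [sq_nonneg (Real.sqrt lam - s), hB.le]

/-- Theorem 1: optimal relay power price: Suppose `b_lb ∈ (0, b_1)`
satisfies `φ(b_lb) = P`, and let `M` be the index with `b_M ≥ b_lb ≥ b_{M+1}` (with the
convention `b_{N+1} = 0`). For `i = 1, …, M` set `γ_i = b_i` and `γ_{M+1} = b_lb`,
`A_i = Σ_{j=1}^i Q_j·F_j/√b_j`, `B_i = Σ_{j=1}^i Q_j·F_j/b_j`, `c_i = (A_i/(2B_i))²`,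
and let `λ_i = γ_{i+1}` if `c_i < γ_{i+1}`, `λ_i = γ_i` if `c_i > γ_i`, and `λ_i = c_i`
otherwise. Then the maximum of the relay revenue
`R(λ) = λ·Σ_{j=1}^N max{0, (Q_j·F_j/√b_j)(1/√λ − 1/√b_j)}` over `λ ∈ [b_lb, b_1]`
equals `max_{i=1,…,M} { A_i·√λ_i − B_i·λ_i }`, attained at the `λ_i` achieving this
maximum. -/
theorem stmt_19 (N : ℕ) (hN : 1 ≤ N)
    (Q F G : ℕ → ℝ)
    (hQ : ∀ j ∈ Finset.Icc 1 N, 0 < Q j)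
    (hF : ∀ j ∈ Finset.Icc 1 N, 0 < F j)
    (hG : ∀ j ∈ Finset.Icc 1 N, 0 < G j)
    (b : ℕ → ℝ) (hb : ∀ j, b j = Q j * F j * G j / (Q j * F j + 1))
    (hord : ∀ j, 1 ≤ j → j < N → b (j + 1) ≤ b j)
    (P : ℝ) (hP : 0 < P)
    (φ : ℝ → ℝ)
    (hφ : ∀ x, φ x = ∑ j ∈ Finset.Icc 1 N,
      max 0 ((Q j * F j / Real.sqrt (b j)) * (1 / Real.sqrt x - 1 / Real.sqrt (b j))))
    (blb : ℝ) (hblb : blb ∈ Set.Ioo 0 (b 1)) (heq : φ blb = P)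
    (M : ℕ) (hM1 : 1 ≤ M) (hMN : M ≤ N)
    (hMlow : blb ≤ b M) (hMhigh : (if M < N then b (M + 1) else 0) ≤ blb)
    (γ : ℕ → ℝ) (hγ : ∀ i, γ i = if i = M + 1 then blb else b i)
    (A B c lamopt : ℕ → ℝ)
    (hA : ∀ i, A i = ∑ j ∈ Finset.Icc 1 i, Q j * F j / Real.sqrt (b j))
    (hB : ∀ i, B i = ∑ j ∈ Finset.Icc 1 i, Q j * F j / b j)
    (hc : ∀ i, c i = (A i / (2 * B i)) ^ 2)
    (hlamopt : ∀ i, lamopt i =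
      if c i < γ (i + 1) then γ (i + 1) else if γ i < c i then γ i else c i)
    (R : ℝ → ℝ)
    (hR : ∀ x, R x = x * ∑ j ∈ Finset.Icc 1 N,
      max 0 ((Q j * F j / Real.sqrt (b j)) * (1 / Real.sqrt x - 1 / Real.sqrt (b j)))) :
    ∃ i ∈ Finset.Icc 1 M,
      (∀ j ∈ Finset.Icc 1 M,
        A j * Real.sqrt (lamopt j) - B j * lamopt j
          ≤ A i * Real.sqrt (lamopt i) - B i * lamopt i) ∧
      IsMaxOn R (Set.Icc blb (b 1)) (lamopt i) ∧
      R (lamopt i) = A i * Real.sqrt (lamopt i) - B i * lamopt i := by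
  have hblb0 : 0 < blb := hblb.1
  have hblb1 : blb < b 1 := hblb.2
  -- positivity of b
  have hbpos : ∀ j, 1 ≤ j → j ≤ N → 0 < b j := by
    intro j h1 h2
    have hq := hQ j (Finset.mem_Icc.mpr ⟨h1, h2⟩)
    have hf := hF j (Finset.mem_Icc.mpr ⟨h1, h2⟩)
    have hg := hG j (Finset.mem_Icc.mpr ⟨h1, h2⟩)
    rw [hb]
    have hqf : 0 < Q j * F j := mul_pos hq hf
    exact div_pos (mul_pos hqf hg) (by linarith)
  have hbanti := stmt19_anti_step b N hord
  -- γ facts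
  have hγpos : ∀ k, 1 ≤ k → k ≤ M + 1 → 0 < γ k := by
    intro k h1 h2
    rw [hγ]; split_ifs with h
    · exact hblb0
    · exact hbpos k h1 (by omega)
  have hγstep : ∀ k, 1 ≤ k → k < M + 1 → γ (k + 1) ≤ γ k := by
    intro k h1 h2
    rw [hγ, hγ]
    by_cases hk : k + 1 = M + 1
    · rw [if_pos hk, if_neg (by omega : ¬ k = M + 1)]
      have : k = M := by omega
      rw [this]; exact hMlow
    · rw [if_neg hk, if_neg (by omega : ¬ k = M + 1)]
      exact hord k h1 (by omega)
  have hγanti := stmt19_anti_step γ (M + 1) hγstep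
  have hγ1 : γ 1 = b 1 := by rw [hγ, if_neg (by omega)]
  have hγM1 : γ (M + 1) = blb := by rw [hγ, if_pos rfl]
  -- A, B positivity
  have hApos : ∀ i, 1 ≤ i → i ≤ N → 0 < A i := by
    intro i h1 h2
    rw [hA]
    apply Finset.sum_pos
    · intro j hj
      obtain ⟨hj1, hj2⟩ := Finset.mem_Icc.mp hj
      have hq := hQ j (Finset.mem_Icc.mpr ⟨hj1, hj2.trans h2⟩)
      have hf := hF j (Finset.mem_Icc.mpr ⟨hj1, hj2.trans h2⟩)
      exact div_pos (mul_pos hq hf) (Real.sqrt_pos.2 (hbpos j hj1 (hj2.trans h2)))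
    · exact ⟨1, Finset.mem_Icc.mpr ⟨le_rfl, h1⟩⟩
  have hBpos : ∀ i, 1 ≤ i → i ≤ N → 0 < B i := by
    intro i h1 h2
    rw [hB]
    apply Finset.sum_pos
    · intro j hj
      obtain ⟨hj1, hj2⟩ := Finset.mem_Icc.mp hj
      have hq := hQ j (Finset.mem_Icc.mpr ⟨hj1, hj2.trans h2⟩)
      have hf := hF j (Finset.mem_Icc.mpr ⟨hj1, hj2.trans h2⟩)
      exact div_pos (mul_pos hq hf) (hbpos j hj1 (hj2.trans h2))
    · exact ⟨1, Finset.mem_Icc.mpr ⟨le_rfl, h1⟩⟩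
  -- R formula on each interval
  have hRint : ∀ i, 1 ≤ i → i ≤ M → ∀ lam, γ (i + 1) ≤ lam → lam ≤ γ i →
      R lam = A i * Real.sqrt lam - B i * lam := by
    intro i h1 h2 lam hl hr
    have hlampos : 0 < lam := lt_of_lt_of_le (hγpos (i + 1) (by omega) (by omega)) hl
    have hγib : γ i = b i := by rw [hγ, if_neg (by omega)]
    rw [hR]
    have hsplit : Finset.Icc 1 N = Finset.Icc 1 i ∪ Finset.Icc (i + 1) N := by
      ext x; simp only [Finset.mem_Icc, Finset.mem_union]; omega
    have hdisj : Disjoint (Finset.Icc 1 i) (Finset.Icc (i + 1) N) := by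
      simp only [Finset.disjoint_left, Finset.mem_Icc]; omega
    rw [hsplit, Finset.sum_union hdisj]
    have h2sum : ∑ j ∈ Finset.Icc (i + 1) N,
        max 0 ((Q j * F j / Real.sqrt (b j)) * (1 / Real.sqrt lam - 1 / Real.sqrt (b j))) = 0 := by
      apply Finset.sum_eq_zero
      intro j hj
      obtain ⟨hj1, hj2⟩ := Finset.mem_Icc.mp hj
      have hbj : 0 < b j := hbpos j (by omega) hj2
      have hble : b j ≤ lam := by
        have hbγ : b j ≤ γ (i + 1) := by
          rw [hγ]; split_ifs with hcase
          · have hMN' : M + 1 ≤ N := by omega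
            have e1 : b j ≤ b (M + 1) := hbanti (M + 1) j (by omega) (by omega) hj2
            have e2 : b (M + 1) ≤ blb := by
              have := hMhigh; rw [if_pos (by omega : M < N)] at this; exact this
            linarith
          · exact hbanti (i + 1) j (by omega) hj1 hj2
        linarith
      apply max_eq_left
      have hc1 : 0 ≤ Q j * F j / Real.sqrt (b j) := by
        have hq := hQ j (Finset.mem_Icc.mpr ⟨by omega, hj2⟩)
        have hf := hF j (Finset.mem_Icc.mpr ⟨by omega, hj2⟩)
        exact (div_pos (mul_pos hq hf) (Real.sqrt_pos.2 hbj)).le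
      have hc2 : 1 / Real.sqrt lam - 1 / Real.sqrt (b j) ≤ 0 := by
        have hsb : 0 < Real.sqrt (b j) := Real.sqrt_pos.2 hbj
        have := one_div_le_one_div_of_le hsb (Real.sqrt_le_sqrt hble)
        linarith
      exact mul_nonpos_of_nonneg_of_nonpos hc1 hc2
    rw [h2sum, add_zero]
    have h1sum : ∀ j ∈ Finset.Icc 1 i,
        max 0 ((Q j * F j / Real.sqrt (b j)) * (1 / Real.sqrt lam - 1 / Real.sqrt (b j)))
          = (Q j * F j / Real.sqrt (b j)) * (1 / Real.sqrt lam - 1 / Real.sqrt (b j)) := by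
      intro j hj
      obtain ⟨hj1, hj2⟩ := Finset.mem_Icc.mp hj
      have hjN : j ≤ N := by omega
      have hbj : 0 < b j := hbpos j hj1 hjN
      have hle : lam ≤ b j := by
        have e1 : b i ≤ b j := hbanti j i hj1 hj2 (by omega)
        calc lam ≤ γ i := hr
        _ = b i := hγib
        _ ≤ b j := e1
      apply max_eq_right
      have hc1 : 0 ≤ Q j * F j / Real.sqrt (b j) := by
        have hq := hQ j (Finset.mem_Icc.mpr ⟨hj1, hjN⟩)
        have hf := hF j (Finset.mem_Icc.mpr ⟨hj1, hjN⟩)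
        exact (div_pos (mul_pos hq hf) (Real.sqrt_pos.2 hbj)).le
      have hc2 : 0 ≤ 1 / Real.sqrt lam - 1 / Real.sqrt (b j) := by
        have hsl : 0 < Real.sqrt lam := Real.sqrt_pos.2 hlampos
        have := one_div_le_one_div_of_le hsl (Real.sqrt_le_sqrt hle)
        linarith
      exact mul_nonneg hc1 hc2
    rw [Finset.sum_congr rfl h1sum, Finset.mul_sum, hA, hB,
      Finset.sum_mul, Finset.sum_mul, ← Finset.sum_sub_distrib]
    apply Finset.sum_congr rfl
    intro j hj
    obtain ⟨hj1, hj2⟩ := Finset.mem_Icc.mp hj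
    have hbj : 0 < b j := hbpos j hj1 (by omega)
    set u := Real.sqrt lam with hu_def
    set v := Real.sqrt (b j) with hv_def
    have hupos : 0 < u := Real.sqrt_pos.2 hlampos
    have hvpos : 0 < v := Real.sqrt_pos.2 hbj
    have e1 : u * u = lam := Real.mul_self_sqrt hlampos.le
    have e2 : v * v = b j := Real.mul_self_sqrt hbj.le
    rw [← e1, ← e2]
    field_simp
  -- cover of [blb, b 1] by the intervals [γ (k+1), γ k]
  have hcover : ∀ lam, blb ≤ lam → lam ≤ b 1 →
      ∃ k, 1 ≤ k ∧ k ≤ M ∧ γ (k + 1) ≤ lam ∧ lam ≤ γ k := by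
    intro lam h1 h2
    have aux : ∀ d k, 1 ≤ k → k + d = M → lam ≤ γ k →
        ∃ k', 1 ≤ k' ∧ k' ≤ M ∧ γ (k' + 1) ≤ lam ∧ lam ≤ γ k' := by
      intro d
      induction d with
      | zero =>
        intro k hk1 hkM hlam
        have hkM' : k = M := by omega
        subst hkM'
        exact ⟨k, hk1, le_rfl, by rw [hγM1]; exact h1, hlam⟩
      | succ d ih =>
        intro k hk1 hkM hlam
        by_cases hcc : γ (k + 1) ≤ lam
        · exact ⟨k, hk1, by omega, hcc, hlam⟩
        · exact ih (k + 1) (by omega) (by omega) (not_le.mp hcc).le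
    exact aux (M - 1) 1 le_rfl (by omega) (by rw [hγ1]; exact h2)
  -- per-interval maximization
  have hquad : ∀ k, 1 ≤ k → k ≤ M →
      lamopt k ∈ Set.Icc (γ (k + 1)) (γ k) ∧
      ∀ lam ∈ Set.Icc (γ (k + 1)) (γ k),
        A k * Real.sqrt lam - B k * lam ≤ A k * Real.sqrt (lamopt k) - B k * lamopt k := by
    intro k h1 h2
    apply stmt19_quad_clamp _ _ _ _ _ (hApos k h1 (h2.trans hMN)) (hBpos k h1 (h2.trans hMN))
      (hγpos (k + 1) (by omega) (by omega)).le (hγstep k h1 (by omega))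
    rw [hlamopt, hc]
  -- choose the maximizing index
  obtain ⟨i, hiM, hmax⟩ := Finset.exists_max_image (Finset.Icc 1 M)
    (fun j => A j * Real.sqrt (lamopt j) - B j * lamopt j)
    ⟨1, Finset.mem_Icc.mpr ⟨le_rfl, hM1⟩⟩
  obtain ⟨hi1, hi2⟩ := Finset.mem_Icc.mp hiM
  have hmemi := (hquad i hi1 hi2).1
  have hRi : R (lamopt i) = A i * Real.sqrt (lamopt i) - B i * lamopt i :=
    hRint i hi1 hi2 _ hmemi.1 hmemi.2
  refine ⟨i, hiM, hmax, ?_, hRi⟩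
  rw [isMaxOn_iff]
  intro lam hlam
  obtain ⟨k, hk1, hkM, hl1, hl2⟩ := hcover lam hlam.1 hlam.2
  have e1 : R lam = A k * Real.sqrt lam - B k * lam := hRint k hk1 hkM lam hl1 hl2
  have e2 := (hquad k hk1 hkM).2 lam ⟨hl1, hl2⟩
  have e3 := hmax k (Finset.mem_Icc.mpr ⟨hk1, hkM⟩)
  rw [e1, hRi]
  linarith
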